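/- Let T_0 be a reverse plane partition of skew shape λ/μ all of whose entries equal a fixed integer k. Then the sum of wt_L(T) over all left-marked RPPs T with underlying RPP T_0 equals the sum of wt_R(T) over all right-marked RPPs T with underlying RPP T_0, where: in a left-marked RPP an entry at (i,j) may be marked iff T(i,j)=T(i,j+1), contributing -α_j if marked, β_{i-1} if unmarked and equal to the entry above, x_k otherwise; in a right-marked RPP an entry at (i,j) may be marked iff T(i,j)=T(i,j-1), contributing -α_{j-1} if marked, β_i if unmarked and equal to the entry below, x_k otherwise. -/

import Mathlib

open Finset

section Aux

variable {R : Type*} [CommRing R]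

private lemma prod_shift (a b : ℕ) (f : ℕ → R) :
    ∏ j ∈ Icc (a + 1) (b + 1), f (j - 1) = ∏ j ∈ Icc a b, f j := by
  rw [← Finset.map_add_right_Icc a b 1, Finset.prod_map]
  refine Finset.prod_congr rfl fun j hj => ?_
  simp [addRightEmbedding]

private lemma prod_split_bot (a b : ℕ) (h : a ≤ b) (f : ℕ → R) :
    ∏ j ∈ Icc a b, f j = f a * ∏ j ∈ Icc (a + 1) b, f j := by
  rw [Finset.Icc_eq_cons_Ioc h, Finset.prod_cons, ← Finset.Icc_add_one_left_eq_Ioc]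

private lemma prod_split_top (c Lm : ℕ) (h : c ≤ Lm + 1) (f : ℕ → R) :
    ∏ j ∈ Icc c (Lm + 1), f j = f (Lm + 1) * ∏ j ∈ Icc c Lm, f j := by
  rw [Finset.Icc_eq_cons_Ico h, Finset.prod_cons, Finset.Ico_add_one_right_eq_Icc]

private lemma prod_union_split (a M b : ℕ) (h1 : a ≤ M + 1) (h2 : M ≤ b) (f : ℕ → R) :
    ∏ j ∈ Icc a b, f j = (∏ j ∈ Icc a M, f j) * ∏ j ∈ Icc (M + 1) b, f j := by
  rw [← Finset.Ico_add_one_right_eq_Icc a b, ← Finset.Ico_add_one_right_eq_Icc a M, ← Finset.Ico_add_one_right_eq_Icc (M+1) b,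
    Finset.prod_Ico_consecutive f h1 (by omega)]

private lemma prod_tail (c Lm : ℕ) (h : c ≤ Lm + 1) (α : ℕ → R) (y : R) :
    ∏ j ∈ Icc c (Lm + 1), ((if c < j then -α (j - 1) else 0) + y)
      = y * ∏ j ∈ Icc c Lm, (-α j + y) := by
  rw [prod_split_bot c (Lm + 1) h]
  rw [if_neg (lt_irrefl c), zero_add]
  congr 1
  rw [← prod_shift c Lm (fun j => -α j + y)]
  refine Finset.prod_congr rfl fun j hj => ?_
  rw [mem_Icc] at hj
  rw [if_pos (by omega)]

private lemma prod_head (c Lm : ℕ) (h : c ≤ Lm + 1) (α : ℕ → R) (y : R) :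
    ∏ j ∈ Icc c (Lm + 1), ((if j < Lm + 1 then -α j else 0) + y)
      = y * ∏ j ∈ Icc c Lm, (-α j + y) := by
  rw [prod_split_top c Lm h]
  rw [if_neg (lt_irrefl (Lm + 1)), zero_add]
  congr 1
  refine Finset.prod_congr rfl fun j hj => ?_
  rw [mem_Icc] at hj
  rw [if_pos (by omega)]

private lemma rowA (m L : ℕ) (α : ℕ → R) (x : R) :
    ∏ j ∈ Icc (m + 1) L, ((if j < L then -α j else 0) + x)
      = ∏ j ∈ Icc (m + 1) L, ((if m + 1 < j then -α (j - 1) else 0) + x) := by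
  rcases Nat.lt_or_ge L (m + 1) with h | h
  · rw [Finset.Icc_eq_empty (by omega)]
    simp
  · obtain ⟨Lm, rfl⟩ : ∃ Lm, L = Lm + 1 := ⟨L - 1, by omega⟩
    rw [prod_head _ _ h, prod_tail _ _ h]

private lemma rowB (m M L : ℕ) (hmM : m ≤ M) (hML : M < L) (α : ℕ → R) (x y : R) :
    (∏ j ∈ Icc (m + 1) L, ((if j < L then -α j else 0) + (if M + 1 ≤ j then y else x)))
      * ∏ j ∈ Icc (M + 1) L, ((if M + 1 < j then -α (j - 1) else 0) + x)
    = (∏ j ∈ Icc (m + 1) L, ((if m + 1 < j then -α (j - 1) else 0) + x))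
      * ∏ j ∈ Icc (M + 1) L, ((if M + 1 < j then -α (j - 1) else 0) + y) := by
  obtain ⟨Lm, rfl⟩ : ∃ Lm, L = Lm + 1 := ⟨L - 1, by omega⟩
  have h1 : m + 1 ≤ M + 1 := by omega
  have h2 : M ≤ Lm + 1 := by omega
  have h2' : M ≤ Lm := by omega
  have hM1 : M + 1 ≤ Lm + 1 := by omega
  have hm1 : m + 1 ≤ Lm + 1 := by omega
  rw [prod_union_split (m + 1) M (Lm + 1) h1 h2]
  have e1 : ∏ j ∈ Icc (m + 1) M, ((if j < Lm + 1 then -α j else 0) + (if M + 1 ≤ j then y else x))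
      = ∏ j ∈ Icc (m + 1) M, (-α j + x) := by
    refine Finset.prod_congr rfl fun j hj => ?_
    rw [mem_Icc] at hj
    rw [if_pos (by omega), if_neg (by omega)]
  have e2 : ∏ j ∈ Icc (M + 1) (Lm + 1),
        ((if j < Lm + 1 then -α j else 0) + (if M + 1 ≤ j then y else x))
      = ∏ j ∈ Icc (M + 1) (Lm + 1), ((if j < Lm + 1 then -α j else 0) + y) := by
    refine Finset.prod_congr rfl fun j hj => ?_
    rw [mem_Icc] at hj
    rw [if_pos (show M + 1 ≤ j by omega)]
  rw [e1, e2, prod_head (M + 1) Lm hM1, prod_tail (M + 1) Lm hM1, prod_tail (M + 1) Lm hM1,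
    prod_tail (m + 1) Lm hm1, prod_union_split (m + 1) M Lm h1 h2']
  ring

private lemma sum_powerset {ι : Type*} [DecidableEq ι] (D M : Finset ι) (hM : M ⊆ D)
    (A B : ι → R) :
    ∑ S ∈ M.powerset, ∏ c ∈ D, (if c ∈ S then A c else B c)
      = ∏ c ∈ D, (if c ∈ M then A c + B c else B c) := by
  have key : ∀ S ∈ M.powerset, ∏ c ∈ D, (if c ∈ S then A c else B c)
      = ((∏ c ∈ S, A c) * ∏ c ∈ M \ S, B c) * ∏ c ∈ D \ M, B c := by
    intro S hS
    rw [mem_powerset] at hS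
    have hSD : S ⊆ D := hS.trans hM
    rw [← Finset.prod_sdiff hSD]
    have hsplit : D \ S = (M \ S) ∪ (D \ M) := by
      ext c
      simp only [mem_sdiff, mem_union]
      have h1 : c ∈ M → c ∈ D := fun h => hM h
      have h2 : c ∈ S → c ∈ M := fun h => hS h
      tauto
    have hdisj : Disjoint (M \ S) (D \ M) := by
      rw [Finset.disjoint_left]
      intro c hc hc'
      exact (mem_sdiff.mp hc').2 (mem_sdiff.mp hc).1
    have e1 : ∏ c ∈ D \ S, (if c ∈ S then A c else B c) = ∏ c ∈ D \ S, B c :=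
      Finset.prod_congr rfl fun c hc => if_neg (mem_sdiff.mp hc).2
    have e2 : ∏ c ∈ S, (if c ∈ S then A c else B c) = ∏ c ∈ S, A c :=
      Finset.prod_congr rfl fun c hc => if_pos hc
    rw [e1, e2, hsplit, Finset.prod_union hdisj]
    ring
  rw [Finset.sum_congr rfl key, ← Finset.sum_mul, ← Finset.prod_add, ← Finset.prod_sdiff hM]
  have e3 : ∏ c ∈ D \ M, (if c ∈ M then A c + B c else B c) = ∏ c ∈ D \ M, B c :=
    Finset.prod_congr rfl fun c hc => if_neg (mem_sdiff.mp hc).2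
  have e4 : ∏ c ∈ M, (if c ∈ M then A c + B c else B c) = ∏ c ∈ M, (A c + B c) :=
    Finset.prod_congr rfl fun c hc => if_pos hc
  rw [e3, e4]
  ring

end Aux

private def Dset (lam mu : ℕ → ℕ) (n : ℕ) : Finset (ℕ × ℕ) :=
  (Finset.Icc 1 n ×ˢ Finset.Icc 1 (lam 1)).filter fun c => mu c.1 < c.2 ∧ c.2 ≤ lam c.1

private lemma mem_Dset {lam mu : ℕ → ℕ} (hlam : ∀ i, lam (i + 1) ≤ lam i) {n i j : ℕ} :
    (i, j) ∈ Dset lam mu n ↔ 1 ≤ i ∧ i ≤ n ∧ mu i < j ∧ j ≤ lam i := by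
  have hanti : ∀ a b : ℕ, a ≤ b → lam b ≤ lam a := fun a b h =>
    (antitone_nat_of_succ_le hlam) h
  simp only [Dset, mem_filter, mem_product, mem_Icc]
  constructor
  · rintro ⟨⟨⟨p1, p2⟩, _, _⟩, p5, p6⟩
    exact ⟨p1, p2, p5, p6⟩
  · rintro ⟨p1, p2, p3, p4⟩
    exact ⟨⟨⟨p1, p2⟩, by omega, le_trans p4 (hanti 1 i p1)⟩, p3, p4⟩

private lemma prod_row_eq {R : Type*} [CommRing R] (a : ℕ) (I : Finset ℕ) (f : ℕ × ℕ → R) :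
    ∏ c ∈ ({a} : Finset ℕ) ×ˢ I, f c = ∏ j ∈ I, f (a, j) := by
  rw [Finset.singleton_product, Finset.prod_map]
  rfl

private lemma prod_LR {R : Type*} [CommRing R] (lam mu : ℕ → ℕ)
    (hlam : ∀ i, lam (i + 1) ≤ lam i) (hmu : ∀ i, mu (i + 1) ≤ mu i)
    (alpha beta : ℕ → R) (x : R) (n : ℕ) :
    ∏ c ∈ Dset lam mu n,
        ((if (c.1, c.2 + 1) ∈ Dset lam mu n then -alpha c.2 else 0)
          + (if (c.1 - 1, c.2) ∈ Dset lam mu n then beta (c.1 - 1) else x))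
      = ∏ c ∈ Dset lam mu n,
        ((if (c.1, c.2 - 1) ∈ Dset lam mu n then -alpha (c.2 - 1) else 0)
          + (if (c.1 + 1, c.2) ∈ Dset lam mu n then beta c.1 else x)) := by
  induction n with
  | zero =>
      have h0 : Dset lam mu 0 = ∅ := by
        ext ⟨i, j⟩
        rw [mem_Dset hlam]
        simp only [Finset.notMem_empty, iff_false]
        rintro ⟨h1, h2, -⟩
        omega
      simp [h0]
  | succ n ih =>
      set D : Finset (ℕ × ℕ) := Dset lam mu n with hD
      set D' : Finset (ℕ × ℕ) := Dset lam mu (n + 1) with hD'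
      have memD : ∀ i j : ℕ, ((i, j) ∈ D ↔ 1 ≤ i ∧ i ≤ n ∧ mu i < j ∧ j ≤ lam i) :=
        fun i j => mem_Dset hlam
      have memD' : ∀ i j : ℕ, ((i, j) ∈ D' ↔ 1 ≤ i ∧ i ≤ n + 1 ∧ mu i < j ∧ j ≤ lam i) :=
        fun i j => mem_Dset hlam
      have hlamn : lam (n + 1) ≤ lam n := hlam n
      have hmun : mu (n + 1) ≤ mu n := hmu n
      set fL : ℕ × ℕ → R := fun c =>
        ((if (c.1, c.2 + 1) ∈ D' then -alpha c.2 else 0)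
          + (if (c.1 - 1, c.2) ∈ D' then beta (c.1 - 1) else x)) with hfL
      set fR : ℕ × ℕ → R := fun c =>
        ((if (c.1, c.2 - 1) ∈ D' then -alpha (c.2 - 1) else 0)
          + (if (c.1 + 1, c.2) ∈ D' then beta c.1 else x)) with hfR
      set gL : ℕ × ℕ → R := fun c =>
        ((if (c.1, c.2 + 1) ∈ D then -alpha c.2 else 0)
          + (if (c.1 - 1, c.2) ∈ D then beta (c.1 - 1) else x)) with hgL
      set gR : ℕ × ℕ → R := fun c =>
        ((if (c.1, c.2 - 1) ∈ D then -alpha (c.2 - 1) else 0)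
          + (if (c.1 + 1, c.2) ∈ D then beta c.1 else x)) with hgR
      set Row : Finset (ℕ × ℕ) := ({n + 1} : Finset ℕ) ×ˢ Icc (mu (n + 1) + 1) (lam (n + 1))
        with hRow
      have memRow : ∀ i j : ℕ,
          ((i, j) ∈ Row ↔ i = n + 1 ∧ mu (n + 1) < j ∧ j ≤ lam (n + 1)) := by
        intro i j
        rw [hRow]
        simp only [Finset.mem_product, Finset.mem_singleton, Finset.mem_Icc]
        omega
      have hDsub : D ⊆ D' := by
        rintro ⟨i, j⟩ hc
        rw [memD] at hc
        rw [memD']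
        exact ⟨hc.1, by omega, hc.2.2⟩
      have hupiff : ∀ i j : ℕ, i ≤ n → ((i, j) ∈ D' ↔ (i, j) ∈ D) := by
        intro i j h
        rw [memD', memD]
        omega
      have hsplit : D' = D ∪ Row := by
        ext ⟨i, j⟩
        rw [Finset.mem_union, memD', memD, memRow]
        constructor
        · rintro ⟨a, b, c, d⟩
          rcases Nat.lt_or_ge i (n + 1) with h | h
          · exact Or.inl ⟨a, by omega, c, d⟩
          · have hi : i = n + 1 := by omega
            subst hi
            exact Or.inr ⟨rfl, c, d⟩
        · rintro (⟨a, b, c, d⟩ | ⟨a, c, d⟩)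
          · exact ⟨a, by omega, c, d⟩
          · subst a
            exact ⟨by omega, by omega, c, d⟩
      have hdisj : Disjoint D Row := by
        rw [Finset.disjoint_left]
        rintro ⟨i, j⟩ hc hr
        rw [memD] at hc
        rw [memRow] at hr
        omega
      set O : Finset (ℕ × ℕ) :=
        D.filter (fun c => (c.1 + 1, c.2) ∈ D' ∧ (c.1 + 1, c.2) ∉ D) with hO
      have hOsub : O ⊆ D := Finset.filter_subset _ _
      -- key identity (proved below)
      have key : (∏ c ∈ O, gR c) * ∏ c ∈ Row, fL c
          = (∏ c ∈ O, fR c) * ∏ c ∈ Row, fR c := by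
        by_cases hcase : 1 ≤ n ∧ mu n < lam (n + 1)
        · -- connected case
          have hOeq : O = ({n} : Finset ℕ) ×ˢ Icc (mu n + 1) (lam (n + 1)) := by
            ext ⟨i, j⟩
            rw [hO, Finset.mem_filter]
            simp only [Finset.mem_product, Finset.mem_singleton, Finset.mem_Icc]
            constructor
            · rintro ⟨hcD, hin, hnot⟩
              rw [memD] at hcD
              rw [memD'] at hin
              rw [memD] at hnot
              have hle : ¬(i + 1 ≤ n) := fun h => hnot ⟨by omega, h, hin.2.2⟩
              have hi : i = n := by omega
              subst hi
              exact ⟨rfl, by omega, hin.2.2.2⟩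
            · rintro ⟨hi, hj1, hj2⟩
              subst hi
              refine ⟨?_, ?_, ?_⟩
              · rw [memD]
                exact ⟨hcase.1, le_rfl, by omega, by omega⟩
              · rw [memD']
                exact ⟨by omega, le_rfl, by omega, by omega⟩
              · rw [memD]
                omega
          rw [hOeq, prod_row_eq, prod_row_eq, hRow, prod_row_eq, prod_row_eq]
          have eGR : ∀ j ∈ Icc (mu n + 1) (lam (n + 1)),
              gR (n, j) = ((if mu n + 1 < j then -alpha (j - 1) else 0) + x) := by
            intro j hj
            rw [Finset.mem_Icc] at hj
            have c1 : ((n, j - 1) ∈ D) ↔ mu n + 1 < j := by rw [memD]; omega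
            have c2 : ¬((n + 1, j) ∈ D) := by rw [memD]; omega
            simp only [hgR, c1, c2, if_false]
          have eFL : ∀ j ∈ Icc (mu (n + 1) + 1) (lam (n + 1)),
              fL (n + 1, j) = ((if j < lam (n + 1) then -alpha j else 0)
                + (if mu n + 1 ≤ j then beta n else x)) := by
            intro j hj
            rw [Finset.mem_Icc] at hj
            have c1 : ((n + 1, j + 1) ∈ D') ↔ j < lam (n + 1) := by rw [memD']; omega
            have c2 : ((n, j) ∈ D') ↔ mu n + 1 ≤ j := by
              rw [memD']
              constructor
              · rintro ⟨-, -, h, -⟩; omega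
              · intro h; exact ⟨hcase.1, by omega, by omega, by omega⟩
            simp only [hfL, Nat.add_sub_cancel, c1, c2]
          have eFRn : ∀ j ∈ Icc (mu n + 1) (lam (n + 1)),
              fR (n, j) = ((if mu n + 1 < j then -alpha (j - 1) else 0) + beta n) := by
            intro j hj
            rw [Finset.mem_Icc] at hj
            have c1 : ((n, j - 1) ∈ D') ↔ mu n + 1 < j := by rw [memD']; omega
            have c2 : ((n + 1, j) ∈ D') := by rw [memD']; exact ⟨by omega, le_rfl, by omega, by omega⟩
            simp only [hfR, c1, c2, if_true]
          have eFR : ∀ j ∈ Icc (mu (n + 1) + 1) (lam (n + 1)),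
              fR (n + 1, j) = ((if mu (n + 1) + 1 < j then -alpha (j - 1) else 0) + x) := by
            intro j hj
            rw [Finset.mem_Icc] at hj
            have c1 : ((n + 1, j - 1) ∈ D') ↔ mu (n + 1) + 1 < j := by rw [memD']; omega
            have c2 : ¬((n + 2, j) ∈ D') := by rw [memD']; omega
            simp only [hfR, c1, c2, if_false]
          rw [Finset.prod_congr rfl eGR, Finset.prod_congr rfl eFL,
            Finset.prod_congr rfl eFRn, Finset.prod_congr rfl eFR]
          linear_combination
            rowB (mu (n + 1)) (mu n) (lam (n + 1)) (hmu n) hcase.2 alpha x (beta n)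
        · -- disconnected case (or n = 0)
          have hdis : n = 0 ∨ lam (n + 1) ≤ mu n := by omega
          have hOempty : O = ∅ := by
            rw [Finset.eq_empty_iff_forall_notMem]
            rintro ⟨i, j⟩ hmem
            rw [hO, Finset.mem_filter] at hmem
            dsimp only at hmem
            obtain ⟨hcD, hin, hnot⟩ := hmem
            rw [memD] at hcD
            rw [memD'] at hin
            rw [memD] at hnot
            have hle : ¬(i + 1 ≤ n) := fun h => hnot ⟨by omega, h, hin.2.2⟩
            have hi : i = n := by omega
            subst hi
            rcases hdis with h0 | h0 <;> omega
          rw [hOempty, Finset.prod_empty, Finset.prod_empty, one_mul, one_mul, hRow, prod_row_eq, prod_row_eq]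
          have eFL : ∀ j ∈ Icc (mu (n + 1) + 1) (lam (n + 1)),
              fL (n + 1, j) = ((if j < lam (n + 1) then -alpha j else 0) + x) := by
            intro j hj
            rw [Finset.mem_Icc] at hj
            have c1 : ((n + 1, j + 1) ∈ D') ↔ j < lam (n + 1) := by rw [memD']; omega
            have c2 : ¬((n, j) ∈ D') := by
              rw [memD']
              rintro ⟨h1, h2, h3, h4⟩
              rcases hdis with h0 | h0 <;> omega
            simp only [hfL, Nat.add_sub_cancel, c1, c2, if_false]
          have eFR : ∀ j ∈ Icc (mu (n + 1) + 1) (lam (n + 1)),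
              fR (n + 1, j) = ((if mu (n + 1) + 1 < j then -alpha (j - 1) else 0) + x) := by
            intro j hj
            rw [Finset.mem_Icc] at hj
            have c1 : ((n + 1, j - 1) ∈ D') ↔ mu (n + 1) + 1 < j := by rw [memD']; omega
            have c2 : ¬((n + 2, j) ∈ D') := by rw [memD']; omega
            simp only [hfR, c1, c2, if_false]
          rw [Finset.prod_congr rfl eFL, Finset.prod_congr rfl eFR]
          exact rowA (mu (n + 1)) (lam (n + 1)) alpha x
      -- assemble
      calc ∏ c ∈ D', fL c
          = (∏ c ∈ D, fL c) * ∏ c ∈ Row, fL c := by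
            rw [Finset.prod_congr hsplit (fun _ _ => rfl), Finset.prod_union hdisj]
        _ = (∏ c ∈ D, gL c) * ∏ c ∈ Row, fL c := by
            congr 1
            refine Finset.prod_congr rfl fun c hc => ?_
            obtain ⟨i, j⟩ := c
            rw [memD] at hc
            simp only [hfL, hgL, hupiff i (j + 1) hc.2.1, hupiff (i - 1) j (by omega)]
        _ = (∏ c ∈ D, gR c) * ∏ c ∈ Row, fL c := by rw [ih]
        _ = ((∏ c ∈ D \ O, gR c) * ∏ c ∈ O, gR c) * ∏ c ∈ Row, fL c := by
            rw [Finset.prod_sdiff hOsub]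
        _ = ((∏ c ∈ D \ O, fR c) * ∏ c ∈ O, gR c) * ∏ c ∈ Row, fL c := by
            congr 2
            refine Finset.prod_congr rfl fun c hc => ?_
            obtain ⟨i, j⟩ := c
            rw [Finset.mem_sdiff] at hc
            obtain ⟨hcD, hcO⟩ := hc
            have hin : i ≤ n := by
              rw [memD] at hcD; exact hcD.2.1
            have c1 : ((i, j - 1) ∈ D') ↔ ((i, j - 1) ∈ D) := hupiff i (j - 1) hin
            have c2 : ((i + 1, j) ∈ D') ↔ ((i + 1, j) ∈ D) := by
              constructor
              · intro h
                by_contra hno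
                exact hcO (by rw [hO, Finset.mem_filter]; exact ⟨hcD, h, hno⟩)
              · intro h; exact hDsub h
            simp only [hfR, hgR, c1, c2]
        _ = ((∏ c ∈ D \ O, fR c) * ∏ c ∈ O, fR c) * ∏ c ∈ Row, fR c := by
            rw [mul_assoc, mul_assoc, key]
        _ = (∏ c ∈ D, fR c) * ∏ c ∈ Row, fR c := by rw [Finset.prod_sdiff hOsub]
        _ = ∏ c ∈ D', fR c := by
            rw [Finset.prod_congr hsplit (fun _ _ => rfl), Finset.prod_union hdisj]

/-- Proposition `leftmarked = rightmarked` for a constant filling: let `λ/μ` be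
a skew shape and fill every cell with the same value `k` (so the cell weight
`x_{T(i,j)}` is a single element `x`).  Then the total weight of left-marked
RPPs on this filling equals the total weight of right-marked RPPs:
a left-marking is a set of cells `(i,j)` with `(i,j+1)` in the shape,
contributing `-α_j` if marked, `β_{i-1}` if unmarked with `(i-1,j)` in the
shape, and `x` otherwise; a right-marking is a set of cells `(i,j)` with
`(i,j-1)` in the shape, contributing `-α_{j-1}` if marked, `β_i` if unmarked
with `(i+1,j)` in the shape, and `x` otherwise. -/
theorem leftmarked_eq_rightmarked {R : Type*} [CommRing R] (n : ℕ)
    (lam mu : ℕ → ℕ)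
    (hlam : ∀ i, lam (i + 1) ≤ lam i) (hmu : ∀ i, mu (i + 1) ≤ mu i)
    (hsub : ∀ i, mu i ≤ lam i)
    (alpha beta : ℕ → R) (x : R) :
    (fun D : Finset (ℕ × ℕ) =>
      (∑ S ∈ (D.filter fun c => (c.1, c.2 + 1) ∈ D).powerset,
          ∏ c ∈ D,
            (if c ∈ S then -alpha c.2
             else if (c.1 - 1, c.2) ∈ D then beta (c.1 - 1) else x))
        =
      (∑ S ∈ (D.filter fun c => (c.1, c.2 - 1) ∈ D).powerset,
          ∏ c ∈ D,
            (if c ∈ S then -alpha (c.2 - 1)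
             else if (c.1 + 1, c.2) ∈ D then beta c.1 else x)))
      ((Finset.Icc 1 n ×ˢ Finset.Icc 1 (lam 1)).filter
        fun c => mu c.1 < c.2 ∧ c.2 ≤ lam c.1) := by
  show
    (∑ S ∈ ((Dset lam mu n).filter fun c => (c.1, c.2 + 1) ∈ Dset lam mu n).powerset,
        ∏ c ∈ Dset lam mu n,
          (if c ∈ S then -alpha c.2
           else if (c.1 - 1, c.2) ∈ Dset lam mu n then beta (c.1 - 1) else x))
      =
    (∑ S ∈ ((Dset lam mu n).filter fun c => (c.1, c.2 - 1) ∈ Dset lam mu n).powerset,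
        ∏ c ∈ Dset lam mu n,
          (if c ∈ S then -alpha (c.2 - 1)
           else if (c.1 + 1, c.2) ∈ Dset lam mu n then beta c.1 else x))
  rw [sum_powerset (Dset lam mu n) _ (Finset.filter_subset _ _)
      (fun c => -alpha c.2) (fun c => if (c.1 - 1, c.2) ∈ Dset lam mu n then beta (c.1 - 1) else x),
    sum_powerset (Dset lam mu n) _ (Finset.filter_subset _ _)
      (fun c => -alpha (c.2 - 1)) (fun c => if (c.1 + 1, c.2) ∈ Dset lam mu n then beta c.1 else x)]
  have eL : ∀ c ∈ Dset lam mu n,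
      (if c ∈ (Dset lam mu n).filter (fun c => (c.1, c.2 + 1) ∈ Dset lam mu n)
        then -alpha c.2 + (if (c.1 - 1, c.2) ∈ Dset lam mu n then beta (c.1 - 1) else x)
        else (if (c.1 - 1, c.2) ∈ Dset lam mu n then beta (c.1 - 1) else x))
      = ((if (c.1, c.2 + 1) ∈ Dset lam mu n then -alpha c.2 else 0)
          + (if (c.1 - 1, c.2) ∈ Dset lam mu n then beta (c.1 - 1) else x)) := by
    intro c hc
    simp only [Finset.mem_filter]
    by_cases h : (c.1, c.2 + 1) ∈ Dset lam mu n
    · rw [if_pos ⟨hc, h⟩, if_pos h]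
    · rw [if_neg (fun hh => h hh.2), if_neg h, zero_add]
  have eR : ∀ c ∈ Dset lam mu n,
      (if c ∈ (Dset lam mu n).filter (fun c => (c.1, c.2 - 1) ∈ Dset lam mu n)
        then -alpha (c.2 - 1) + (if (c.1 + 1, c.2) ∈ Dset lam mu n then beta c.1 else x)
        else (if (c.1 + 1, c.2) ∈ Dset lam mu n then beta c.1 else x))
      = ((if (c.1, c.2 - 1) ∈ Dset lam mu n then -alpha (c.2 - 1) else 0)
          + (if (c.1 + 1, c.2) ∈ Dset lam mu n then beta c.1 else x)) := by
    intro c hc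
    simp only [Finset.mem_filter]
    by_cases h : (c.1, c.2 - 1) ∈ Dset lam mu n
    · rw [if_pos ⟨hc, h⟩, if_pos h]
    · rw [if_neg (fun hh => h hh.2), if_neg h, zero_add]
  rw [Finset.prod_congr rfl eL, Finset.prod_congr rfl eR]
  exact prod_LR lam mu hlam hmu alpha beta x n
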